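/- Let p be a positive odd integer and q an even integer with gcd(p,q) = 1, q ≠ 0. Write q = 2q₀ and set ε_i = (−1)^⌊iq/p⌋ for 1 ≤ i ≤ p−1. Then q₀ · ∑_{i=1}^{p−1} i·ε_i ≡ −(p−1)²/4 (mod p). -/

import Mathlib

open Finset

/-- ε_i = (−1)^⌊iq/p⌋ -/
def eps (p q i : ℤ) : ℤ := ((-1 : ℤˣ) ^ ⌊(i * q : ℚ) / (p : ℚ)⌋ : ℤˣ)

/-- d(i) = ∑_{k=1}^{i} ε_k -/
noncomputable def dd (p q i : ℤ) : ℤ := ∑ k ∈ Finset.Icc 1 i, eps p q k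

/-- χ(r) = 1 if 2r < p, −1 otherwise -/
def chi (p r : ℤ) : ℤ := if 2 * r < p then 1 else -1

lemma floor_int_div (a p : ℤ) (hp : 0 < p) : ⌊(a : ℚ) / (p : ℚ)⌋ = a / p := by
  have h := Rat.floor_intCast_div_natCast a p.toNat
  have h3 : ((p.toNat : ℕ) : ℤ) = p := Int.toNat_of_nonneg hp.le
  have h2 : ((p.toNat : ℕ) : ℚ) = (p : ℚ) := by exact_mod_cast congrArg (fun z : ℤ => (z : ℚ)) h3
  rw [h2, h3] at h
  exact h

lemma eps_eq_chi (p q₀ i : ℤ) (hp : 0 < p) :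
    eps p (2 * q₀) i = chi p (i * q₀ % p) := by
  have hpne : p ≠ 0 := hp.ne'
  set r := i * q₀ % p with hr
  set d := i * q₀ / p with hd
  have hr0 : 0 ≤ r := Int.emod_nonneg _ hpne
  have hrp : r < p := Int.emod_lt_of_pos _ hp
  have hiq : i * q₀ = p * d + r := by rw [hd, hr]; exact (Int.mul_ediv_add_emod _ _).symm
  have hfl : ⌊(↑i * ↑(2 * q₀) : ℚ) / (p : ℚ)⌋ = 2 * r / p + 2 * d := by
    have h1 : ⌊((i * (2 * q₀) : ℤ) : ℚ) / (p : ℚ)⌋ = (i * (2 * q₀)) / p :=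
      floor_int_div _ _ hp
    rw [Int.cast_mul] at h1
    rw [h1]
    have : i * (2 * q₀) = 2 * r + 2 * d * p := by
      calc i * (2 * q₀) = 2 * (p * d + r) := by rw [← hiq]; ring
        _ = 2 * r + 2 * d * p := by ring
    rw [this, Int.add_mul_ediv_right _ _ hpne]
  unfold eps chi
  rw [hfl]
  by_cases hcase : 2 * r < p
  · have ht : 2 * r / p = 0 := Int.ediv_eq_zero_of_lt (by linarith) hcase
    rw [ht, if_pos hcase]
    have : Even ((0 : ℤ) + 2 * d) := ⟨d, by ring⟩
    rw [this.neg_one_zpow]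
    simp
  · have hple : p ≤ 2 * r := le_of_not_gt hcase
    have ht : 2 * r / p = 1 := by
      have : 2 * r = (2 * r - p) + 1 * p := by ring
      rw [this, Int.add_mul_ediv_right _ _ hpne,
        Int.ediv_eq_zero_of_lt (by linarith) (by linarith)]
      norm_num
    rw [ht, if_neg hcase]
    have hev : Even ((2 : ℤ) * d) := ⟨d, two_mul d⟩
    rw [zpow_add, zpow_one, hev.neg_one_zpow, mul_one]
    simp

lemma sum_perm (p q₀ : ℤ) (hp : 0 < p) (hco : IsCoprime p q₀) (f : ℤ → ℤ) :
    ∑ i ∈ Icc (1 : ℤ) (p - 1), f (i * q₀ % p) = ∑ r ∈ Icc (1 : ℤ) (p - 1), f r := by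
  have hpne : p ≠ 0 := hp.ne'
  have hmem : ∀ a ∈ Icc (1 : ℤ) (p - 1), a * q₀ % p ∈ Icc (1 : ℤ) (p - 1) := by
    intro a ha
    rw [mem_Icc] at ha ⊢
    have h0 : 0 ≤ a * q₀ % p := Int.emod_nonneg _ hpne
    have h1 : a * q₀ % p < p := Int.emod_lt_of_pos _ hp
    have hne : a * q₀ % p ≠ 0 := by
      intro h
      have hdvd : p ∣ a * q₀ := Int.dvd_of_emod_eq_zero h
      have : p ∣ a := hco.dvd_of_dvd_mul_right hdvd
      have := Int.le_of_dvd (by omega) this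
      omega
    omega
  have hinj : ∀ a₁ ∈ Icc (1 : ℤ) (p - 1), ∀ a₂ ∈ Icc (1 : ℤ) (p - 1),
      a₁ * q₀ % p = a₂ * q₀ % p → a₁ = a₂ := by
    intro a₁ h₁ a₂ h₂ h
    rw [mem_Icc] at h₁ h₂
    have hdvd : p ∣ a₁ * q₀ - a₂ * q₀ := Int.ModEq.dvd (Int.ModEq.symm h)
    have : a₁ * q₀ - a₂ * q₀ = (a₁ - a₂) * q₀ := by ring
    rw [this] at hdvd
    have hdvd2 : p ∣ a₁ - a₂ := hco.dvd_of_dvd_mul_right hdvd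
    have : a₁ - a₂ = 0 := Int.eq_zero_of_abs_lt_dvd hdvd2 (by rw [abs_lt]; omega)
    omega
  refine Finset.sum_bij (fun a _ => a * q₀ % p) hmem
    (fun a₁ ha₁ a₂ ha₂ h => hinj a₁ ha₁ a₂ ha₂ h) ?_ (fun a _ => rfl)
  intro b hb
  obtain ⟨a, ha, hab⟩ := Finset.surj_on_of_inj_on_of_card_le (fun a _ => a * q₀ % p)
    hmem (fun a₁ a₂ h₁ h₂ h => hinj a₁ h₁ a₂ h₂ h) le_rfl b hb
  exact ⟨a, ha, hab.symm⟩

lemma sum_chi (m : ℤ) (hm : 0 ≤ m) :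
    ∑ r ∈ Icc (1 : ℤ) (2 * m), r * chi (2 * m + 1) r = -(m * m) := by
  have h1 : Icc (1 : ℤ) (2 * m) = Ioc 0 (2 * m) := by
    ext x; simp only [mem_Icc, mem_Ioc]; omega
  have hdis : Disjoint (Ioc (0 : ℤ) m) (Ioc m (2 * m)) := by
    rw [Finset.disjoint_left]
    intro a ha hb
    rw [mem_Ioc] at ha hb
    omega
  rw [h1, ← Ioc_union_Ioc_eq_Ioc hm (by linarith : m ≤ 2 * m), Finset.sum_union hdis]
  have hA : ∑ r ∈ Ioc (0 : ℤ) m, r * chi (2 * m + 1) r = ∑ r ∈ Ioc (0 : ℤ) m, r := by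
    apply Finset.sum_congr rfl
    intro r hr
    rw [mem_Ioc] at hr
    rw [chi, if_pos (by omega), mul_one]
  have hB : ∑ r ∈ Ioc m (2 * m), r * chi (2 * m + 1) r
      = ∑ r ∈ Ioc (0 : ℤ) m, -(r + m) := by
    rw [show ∑ r ∈ Ioc m (2 * m), r * chi (2 * m + 1) r
        = ∑ r ∈ Ioc m (2 * m), -r from Finset.sum_congr rfl (fun r hr => by
          rw [mem_Ioc] at hr; rw [chi, if_neg (by omega)]; ring)]
    apply Finset.sum_bij' (fun r _ => r - m) (fun r _ => r + m)
    · intro a ha; rw [mem_Ioc] at ha ⊢; omega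
    · intro a ha; rw [mem_Ioc] at ha ⊢; omega
    · intro a _; ring
    · intro a _; ring
    · intro a _; ring
  rw [hA, hB, ← Finset.sum_add_distrib]
  have : ∀ r ∈ Ioc (0 : ℤ) m, r + -(r + m) = -m := fun r _ => by ring
  rw [Finset.sum_congr rfl this, Finset.sum_const, Int.card_Ioc]
  simp only [nsmul_eq_mul, sub_zero]
  rw [Int.toNat_of_nonneg hm]
  ring

theorem stmt6 (p q q₀ : ℤ) (hp : 0 < p) (hpodd : Odd p) (hcop : IsCoprime p q)
    (hq0 : q ≠ 0) (hq : q = 2 * q₀) :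
    q₀ * ∑ i ∈ Finset.Icc (1 : ℤ) (p - 1), i * eps p q i ≡ -((p - 1) ^ 2 / 4) [ZMOD p] := by
  subst hq
  have hco : IsCoprime p q₀ := hcop.of_mul_right_right
  obtain ⟨m, hm⟩ := hpodd
  have hm0 : 0 ≤ m := by omega
  have step1 : q₀ * ∑ i ∈ Icc (1 : ℤ) (p - 1), i * eps p (2 * q₀) i
      = ∑ i ∈ Icc (1 : ℤ) (p - 1), (i * q₀) * eps p (2 * q₀) i := by
    rw [Finset.mul_sum]
    exact Finset.sum_congr rfl (fun i _ => by ring)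
  have step2 : ∑ i ∈ Icc (1 : ℤ) (p - 1), (i * q₀) * eps p (2 * q₀) i
      ≡ ∑ i ∈ Icc (1 : ℤ) (p - 1), (i * q₀ % p) * chi p (i * q₀ % p) [ZMOD p] := by
    rw [Int.modEq_iff_dvd, ← Finset.sum_sub_distrib]
    apply Finset.dvd_sum
    intro i _
    rw [eps_eq_chi p q₀ i hp]
    have : i * q₀ % p * chi p (i * q₀ % p) - i * q₀ * chi p (i * q₀ % p)
        = -(p * (i * q₀ / p)) * chi p (i * q₀ % p) := by
      rw [Int.emod_def]; ring
    rw [this]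
    exact Dvd.dvd.mul_right (dvd_neg.mpr (dvd_mul_right p _)) _
  have step3 : ∑ i ∈ Icc (1 : ℤ) (p - 1), (i * q₀ % p) * chi p (i * q₀ % p)
      = ∑ r ∈ Icc (1 : ℤ) (p - 1), r * chi p r :=
    sum_perm p q₀ hp hco (fun r => r * chi p r)
  have step4 : ∑ r ∈ Icc (1 : ℤ) (p - 1), r * chi p r = -(m * m) := by
    rw [hm, show 2 * m + 1 - 1 = 2 * m by ring]
    exact sum_chi m hm0
  have step5 : -((p - 1) ^ 2 / 4) = -(m * m) := by
    rw [hm, show (2 * m + 1 - 1 : ℤ) ^ 2 = 4 * (m * m) by ring,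
      Int.mul_ediv_cancel_left _ (by norm_num : (4 : ℤ) ≠ 0)]
  rw [step1, step5, ← step4, ← step3]
  exact step2
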